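/- Let A = (a_{ij}) be a 2×2 matrix whose entries a_{ij} are vectors in ℂ³, and let q_A ∈ ℂ[y₀, y₁, y₂] be the quadratic form q_A(y) = ⟨a₁₁, y⟩⟨a₂₂, y⟩ − ⟨a₁₂, y⟩⟨a₂₁, y⟩, where ⟨v, y⟩ = v₀y₀ + v₁y₁ + v₂y₂. Assume q_A ≠ 0 and q_A factors as a product of two linear forms. Then there exist invertible matrices P, Q ∈ GL₂(ℂ) such that the transformed matrix PAQ, defined by (PAQ)_{ij} = Σ_{k,l} P_{ik} a_{kl} Q_{lj} ∈ ℂ³, has vanishing (1,2)-entry; that is, A is GL₂(ℂ) × GL₂(ℂ)-equivalent to a matrix of the form (x 0; z y). -/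

import Mathlib

open Complex

private lemma vec2_ne_zero_of_fst {x y : ℂ} (hx : x ≠ 0) : (![x, y] : Fin 2 → ℂ) ≠ 0 := by
  intro h; exact hx (congrFun h 0)

private lemma vec2_ne_zero_of_snd {x y : ℂ} (hy : y ≠ 0) : (![x, y] : Fin 2 → ℂ) ≠ 0 := by
  intro h; exact hy (congrFun h 1)

private lemma self_pair_ne (g : Fin 2 → ℂ) (hg : g ≠ 0) :
    g 0 * (starRingEnd ℂ) (g 0) + g 1 * (starRingEnd ℂ) (g 1) ≠ 0 := by
  rw [Complex.mul_conj, Complex.mul_conj, ← Complex.ofReal_add]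
  intro h
  have h' : Complex.normSq (g 0) + Complex.normSq (g 1) = 0 := by exact_mod_cast h
  apply hg
  have h0 : Complex.normSq (g 0) = 0 := by
    nlinarith [Complex.normSq_nonneg (g 0), Complex.normSq_nonneg (g 1)]
  have h1 : Complex.normSq (g 1) = 0 := by
    nlinarith [Complex.normSq_nonneg (g 0), Complex.normSq_nonneg (g 1)]
  funext i
  fin_cases i
  · exact Complex.normSq_eq_zero.mp h0
  · exact Complex.normSq_eq_zero.mp h1

private lemma prod_lin_eq_zero (g h : Fin 2 → ℂ)
    (H : ∀ z : Fin 2 → ℂ, (g 0 * z 0 + g 1 * z 1) * (h 0 * z 0 + h 1 * z 1) = 0) :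
    g = 0 ∨ h = 0 := by
  by_contra hc
  push_neg at hc
  obtain ⟨hg, hh⟩ := hc
  have hG := self_pair_ne g hg
  have hH := self_pair_ne h hh
  have h1 := H ![(starRingEnd ℂ) (g 0), (starRingEnd ℂ) (g 1)]
  have h2 := H ![(starRingEnd ℂ) (h 0), (starRingEnd ℂ) (h 1)]
  have h3 := H ![(starRingEnd ℂ) (g 0) + (starRingEnd ℂ) (h 0),
                (starRingEnd ℂ) (g 1) + (starRingEnd ℂ) (h 1)]
  simp only [Matrix.cons_val_zero, Matrix.cons_val_one, Matrix.head_cons] at h1 h2 h3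
  have hB : h 0 * (starRingEnd ℂ) (g 0) + h 1 * (starRingEnd ℂ) (g 1) = 0 := by
    rcases mul_eq_zero.mp h1 with h' | h'
    · exact absurd h' hG
    · exact h'
  have hC : g 0 * (starRingEnd ℂ) (h 0) + g 1 * (starRingEnd ℂ) (h 1) = 0 := by
    rcases mul_eq_zero.mp h2 with h' | h'
    · exact h'
    · exact absurd h' hH
  have key : (g 0 * (starRingEnd ℂ) (g 0) + g 1 * (starRingEnd ℂ) (g 1)) *
      (h 0 * (starRingEnd ℂ) (h 0) + h 1 * (starRingEnd ℂ) (h 1)) = 0 := by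
    linear_combination h3 - (g 0 * (starRingEnd ℂ) (g 0) + g 1 * (starRingEnd ℂ) (g 1) +
      g 0 * (starRingEnd ℂ) (h 0) + g 1 * (starRingEnd ℂ) (h 1)) * hB -
      (h 0 * (starRingEnd ℂ) (h 0) + h 1 * (starRingEnd ℂ) (h 1)) * hC
  exact mul_ne_zero hG hH key

private lemma prop_of (f w : Fin 2 → ℂ) (hf : f ≠ 0) (h : w 0 * f 1 - w 1 * f 0 = 0) :
    ∃ t : ℂ, w = t • f := by
  by_cases h0 : f 0 = 0
  · have h1 : f 1 ≠ 0 := by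
      intro h1
      exact hf (by funext i; fin_cases i <;> simp [h0, h1])
    refine ⟨w 1 / f 1, ?_⟩
    funext i
    fin_cases i <;> simp only [Pi.smul_apply, smul_eq_mul, Fin.zero_eta, Fin.mk_one]
    · field_simp
      linear_combination h
    · field_simp
  · refine ⟨w 0 / f 0, ?_⟩
    funext i
    fin_cases i <;> simp only [Pi.smul_apply, smul_eq_mul, Fin.zero_eta, Fin.mk_one]
    · field_simp
    · field_simp
      linear_combination -h

private lemma exists_perp (lam mu : ℂ) :
    ∃ q : Fin 2 → ℂ, q ≠ 0 ∧ q 0 * lam + q 1 * mu = 0 := by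
  by_cases h : lam = 0 ∧ mu = 0
  · exact ⟨![1, 0], vec2_ne_zero_of_fst one_ne_zero, by simp [h.1, h.2]⟩
  · refine ⟨![mu, -lam], ?_, by simp; ring⟩
    intro hq
    apply h
    refine ⟨?_, ?_⟩
    · have := congrFun hq 1; simpa using this
    · have := congrFun hq 0; simpa using this

private lemma exists_basis (u : Fin 3 → ℂ) (hu : u ≠ 0) :
    ∃ e1 e2 : Fin 3 → ℂ, (∑ i, u i * e1 i) = 0 ∧ (∑ i, u i * e2 i) = 0 ∧
      ∀ w : Fin 3 → ℂ, (∑ i, w i * e1 i) = 0 → (∑ i, w i * e2 i) = 0 →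
        ∃ μ : ℂ, w = μ • u := by
  have hj : ∃ j, u j ≠ 0 := by
    by_contra hc; push_neg at hc; exact hu (funext hc)
  obtain ⟨j, hj⟩ := hj
  fin_cases j
  · have h0 : u 0 ≠ 0 := hj
    refine ⟨![-(u 1), u 0, 0], ![-(u 2), 0, u 0],
      by simp [Fin.sum_univ_three]; ring, by simp [Fin.sum_univ_three]; ring, ?_⟩
    intro w h1 h2
    simp only [Fin.sum_univ_three, Matrix.cons_val_zero, Matrix.cons_val_one,
      Matrix.head_cons, Matrix.cons_val_two, Matrix.tail_cons, mul_zero, add_zero,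
      mul_neg] at h1 h2
    refine ⟨w 0 / u 0, ?_⟩
    funext i
    fin_cases i <;> simp only [Pi.smul_apply, smul_eq_mul]
    · show w 0 = w 0 / u 0 * u 0
      field_simp
    · show w 1 = w 0 / u 0 * u 1
      field_simp
      linear_combination h1
    · show w 2 = w 0 / u 0 * u 2
      field_simp
      linear_combination h2
  · have h0 : u 1 ≠ 0 := hj
    refine ⟨![u 1, -(u 0), 0], ![0, -(u 2), u 1],
      by simp [Fin.sum_univ_three]; ring, by simp [Fin.sum_univ_three]; ring, ?_⟩
    intro w h1 h2
    simp only [Fin.sum_univ_three, Matrix.cons_val_zero, Matrix.cons_val_one,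
      Matrix.head_cons, Matrix.cons_val_two, Matrix.tail_cons, mul_zero, add_zero,
      zero_add, mul_neg] at h1 h2
    refine ⟨w 1 / u 1, ?_⟩
    funext i
    fin_cases i <;> simp only [Pi.smul_apply, smul_eq_mul]
    · show w 0 = w 1 / u 1 * u 0
      field_simp
      linear_combination h1
    · show w 1 = w 1 / u 1 * u 1
      field_simp
    · show w 2 = w 1 / u 1 * u 2
      field_simp
      linear_combination h2
  · have h0 : u 2 ≠ 0 := hj
    refine ⟨![u 2, 0, -(u 0)], ![0, u 2, -(u 1)],
      by simp [Fin.sum_univ_three]; ring, by simp [Fin.sum_univ_three]; ring, ?_⟩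
    intro w h1 h2
    simp only [Fin.sum_univ_three, Matrix.cons_val_zero, Matrix.cons_val_one,
      Matrix.head_cons, Matrix.cons_val_two, Matrix.tail_cons, mul_zero, add_zero,
      zero_add, mul_neg] at h1 h2
    refine ⟨w 2 / u 2, ?_⟩
    funext i
    fin_cases i <;> simp only [Pi.smul_apply, smul_eq_mul]
    · show w 0 = w 2 / u 2 * u 0
      field_simp
      linear_combination h1
    · show w 1 = w 2 / u 2 * u 1
      field_simp
      linear_combination h2
    · show w 2 = w 2 / u 2 * u 2
      field_simp

private noncomputable def barv (e1 e2 w : Fin 3 → ℂ) : Fin 2 → ℂ :=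
  ![∑ i, w i * e1 i, ∑ i, w i * e2 i]

private lemma core (a b c d u : Fin 3 → ℂ) (hu : u ≠ 0)
    (h : ∀ y : Fin 3 → ℂ, (∑ i, u i * y i) = 0 →
      (∑ i, a i * y i) * (∑ i, d i * y i) = (∑ i, b i * y i) * (∑ i, c i * y i)) :
    ∃ p q : Fin 2 → ℂ, p ≠ 0 ∧ q ≠ 0 ∧
      (p 0 * q 0) • a + (p 0 * q 1) • b + (p 1 * q 0) • c + (p 1 * q 1) • d = 0 := by
  obtain ⟨e1, e2, he1, he2, hker⟩ := exists_basis u hu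
  have hP : ∀ z : Fin 2 → ℂ,
      (barv e1 e2 a 0 * z 0 + barv e1 e2 a 1 * z 1) *
        (barv e1 e2 d 0 * z 0 + barv e1 e2 d 1 * z 1) =
      (barv e1 e2 b 0 * z 0 + barv e1 e2 b 1 * z 1) *
        (barv e1 e2 c 0 * z 0 + barv e1 e2 c 1 * z 1) := by
    intro z
    have hy := h (z 0 • e1 + z 1 • e2) (by
      have he1' := he1
      have he2' := he2
      simp only [Fin.sum_univ_three] at he1' he2'
      simp only [Fin.sum_univ_three, Pi.add_apply, Pi.smul_apply, smul_eq_mul]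
      linear_combination z 0 * he1' + z 1 * he2')
    have hw : ∀ w : Fin 3 → ℂ, (∑ i, w i * (z 0 • e1 + z 1 • e2) i) =
        barv e1 e2 w 0 * z 0 + barv e1 e2 w 1 * z 1 := by
      intro w
      simp only [barv, Fin.sum_univ_three, Pi.add_apply, Pi.smul_apply, smul_eq_mul,
        Matrix.cons_val_zero, Matrix.cons_val_one, Matrix.head_cons]
      ring
    rw [hw, hw, hw, hw] at hy
    exact hy
  have hlift : ∀ (w w' : Fin 3 → ℂ) (t : ℂ), barv e1 e2 w = t • barv e1 e2 w' →
      ∃ μ : ℂ, w = t • w' + μ • u := by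
    intro w w' t hw
    have h1 := congrFun hw 0
    have h2 := congrFun hw 1
    simp only [barv, Pi.smul_apply, smul_eq_mul, Matrix.cons_val_zero, Matrix.cons_val_one,
      Matrix.head_cons, Fin.sum_univ_three] at h1 h2
    obtain ⟨μ, hμ⟩ := hker (w - t • w')
      (by simp only [Fin.sum_univ_three, Pi.sub_apply, Pi.smul_apply, smul_eq_mul]
          linear_combination h1)
      (by simp only [Fin.sum_univ_three, Pi.sub_apply, Pi.smul_apply, smul_eq_mul]
          linear_combination h2)
    refine ⟨μ, ?_⟩
    rw [← hμ]
    abel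
  by_cases hA : barv e1 e2 a = 0
  · -- a is a multiple of u
    have h1 := congrFun hA 0
    have h2 := congrFun hA 1
    simp only [barv, Matrix.cons_val_zero, Matrix.cons_val_one, Matrix.head_cons,
      Pi.zero_apply] at h1 h2
    obtain ⟨lam, ha⟩ := hker a h1 h2
    have hbc : barv e1 e2 b = 0 ∨ barv e1 e2 c = 0 := by
      refine prod_lin_eq_zero _ _ (fun z => ?_)
      have hz := hP z
      rw [hA] at hz
      simp only [Pi.zero_apply, zero_mul, add_zero, zero_add] at hz
      exact hz.symm
    rcases hbc with hB | hC
    · -- b is a multiple of u as well; use p = (1,0)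
      have hb1 := congrFun hB 0
      have hb2 := congrFun hB 1
      simp only [barv, Matrix.cons_val_zero, Matrix.cons_val_one, Matrix.head_cons,
        Pi.zero_apply] at hb1 hb2
      obtain ⟨mu, hb⟩ := hker b hb1 hb2
      obtain ⟨q, hq0, hqe⟩ := exists_perp lam mu
      refine ⟨![1, 0], q, vec2_ne_zero_of_fst one_ne_zero, hq0, ?_⟩
      rw [ha, hb]
      simp only [Matrix.cons_val_zero, Matrix.cons_val_one, Matrix.head_cons,
        one_mul, zero_mul, zero_smul, add_zero, smul_smul]
      match_scalars <;> first | linear_combination hqe | linear_combination -hqe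
    · -- c is a multiple of u; use q = (1,0)
      have hc1 := congrFun hC 0
      have hc2 := congrFun hC 1
      simp only [barv, Matrix.cons_val_zero, Matrix.cons_val_one, Matrix.head_cons,
        Pi.zero_apply] at hc1 hc2
      obtain ⟨mu, hc⟩ := hker c hc1 hc2
      obtain ⟨p, hp0, hpe⟩ := exists_perp lam mu
      refine ⟨p, ![1, 0], hp0, vec2_ne_zero_of_fst one_ne_zero, ?_⟩
      rw [ha, hc]
      simp only [Matrix.cons_val_zero, Matrix.cons_val_one, Matrix.head_cons,
        mul_one, mul_zero, zero_smul, add_zero, smul_smul]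
      match_scalars <;> first | linear_combination hpe | linear_combination -hpe
  · -- a-bar nonzero
    have hz0 := hP ![barv e1 e2 a 1, -(barv e1 e2 a 0)]
    simp only [Matrix.cons_val_zero, Matrix.cons_val_one, Matrix.head_cons] at hz0
    have h00 : (barv e1 e2 b 0 * barv e1 e2 a 1 - barv e1 e2 b 1 * barv e1 e2 a 0) *
        (barv e1 e2 c 0 * barv e1 e2 a 1 - barv e1 e2 c 1 * barv e1 e2 a 0) = 0 := by
      linear_combination -hz0
    rcases mul_eq_zero.mp h00 with hfac | hfac
    · -- bar b = t • bar a
      obtain ⟨t, hbt⟩ := prop_of (barv e1 e2 a) (barv e1 e2 b) hA hfac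
      have hdc : barv e1 e2 d = t • barv e1 e2 c := by
        have := prod_lin_eq_zero (barv e1 e2 a) (barv e1 e2 d - t • barv e1 e2 c) (fun z => by
          have hp0 := congrFun hbt 0
          have hp1 := congrFun hbt 1
          simp only [Pi.smul_apply, smul_eq_mul] at hp0 hp1
          simp only [Pi.sub_apply, Pi.smul_apply, smul_eq_mul]
          linear_combination hP z + ((barv e1 e2 c 0 * z 0 + barv e1 e2 c 1 * z 1) * z 0) * hp0
            + ((barv e1 e2 c 0 * z 0 + barv e1 e2 c 1 * z 1) * z 1) * hp1)
        rcases this with h' | h'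
        · exact absurd h' hA
        · exact sub_eq_zero.mp h'
      obtain ⟨mu1, hb⟩ := hlift b a t hbt
      obtain ⟨mu2, hd⟩ := hlift d c t hdc
      obtain ⟨p, hp0, hpe⟩ := exists_perp mu1 mu2
      refine ⟨p, ![-t, 1], hp0, vec2_ne_zero_of_snd one_ne_zero, ?_⟩
      rw [hb, hd]
      simp only [Matrix.cons_val_zero, Matrix.cons_val_one, Matrix.head_cons, mul_one]
      match_scalars
      · ring
      · linear_combination hpe
      · ring
    · -- bar c = t • bar a
      obtain ⟨t, hct⟩ := prop_of (barv e1 e2 a) (barv e1 e2 c) hA hfac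
      have hdb : barv e1 e2 d = t • barv e1 e2 b := by
        have := prod_lin_eq_zero (barv e1 e2 a) (barv e1 e2 d - t • barv e1 e2 b) (fun z => by
          have hp0 := congrFun hct 0
          have hp1 := congrFun hct 1
          simp only [Pi.smul_apply, smul_eq_mul] at hp0 hp1
          simp only [Pi.sub_apply, Pi.smul_apply, smul_eq_mul]
          linear_combination hP z + ((barv e1 e2 b 0 * z 0 + barv e1 e2 b 1 * z 1) * z 0) * hp0
            + ((barv e1 e2 b 0 * z 0 + barv e1 e2 b 1 * z 1) * z 1) * hp1)
        rcases this with h' | h'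
        · exact absurd h' hA
        · exact sub_eq_zero.mp h'
      obtain ⟨mu1, hc⟩ := hlift c a t hct
      obtain ⟨mu2, hd⟩ := hlift d b t hdb
      obtain ⟨q, hq0, hqe⟩ := exists_perp mu1 mu2
      refine ⟨![-t, 1], q, vec2_ne_zero_of_snd one_ne_zero, hq0, ?_⟩
      rw [hc, hd]
      simp only [Matrix.cons_val_zero, Matrix.cons_val_one, Matrix.head_cons, one_mul]
      match_scalars
      · ring
      · ring
      · linear_combination hqe

/-- Let `A = (a_{ij})` be a 2×2 matrix with entries in `ℂ³`, and let
`q_A(y) = ⟨a₁₁, y⟩⟨a₂₂, y⟩ − ⟨a₁₂, y⟩⟨a₂₁, y⟩` where `⟨v, y⟩ = Σ vᵢ yᵢ`. If `q_A ≠ 0` and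
`q_A` factors as a product of two linear forms, then there are invertible `P, Q ∈ GL₂(ℂ)`
such that the transformed matrix `PAQ`, with `(PAQ)_{ij} = Σ_{k,l} P_{ik} a_{kl} Q_{lj}`,
has vanishing `(1,2)`-entry; that is, `A` is equivalent to a matrix of the form
`(x 0; z y)`. -/
theorem stmt_10 (A : Matrix (Fin 2) (Fin 2) (Fin 3 → ℂ))
    (hq : (fun y : Fin 3 → ℂ =>
        (∑ i, A 0 0 i * y i) * (∑ i, A 1 1 i * y i) -
        (∑ i, A 0 1 i * y i) * (∑ i, A 1 0 i * y i)) ≠ 0)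
    (hfact : ∃ u v : Fin 3 → ℂ, ∀ y : Fin 3 → ℂ,
        (∑ i, A 0 0 i * y i) * (∑ i, A 1 1 i * y i) -
        (∑ i, A 0 1 i * y i) * (∑ i, A 1 0 i * y i) =
        (∑ i, u i * y i) * (∑ i, v i * y i)) :
    ∃ P Q : Matrix (Fin 2) (Fin 2) ℂ, IsUnit P.det ∧ IsUnit Q.det ∧
      ∑ k : Fin 2, ∑ l : Fin 2, (P 0 k * Q l 1) • A k l = 0 := by
  obtain ⟨u, v, huv⟩ := hfact
  have hu : u ≠ 0 := by
    intro h0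
    apply hq
    funext y
    rw [huv y, h0]
    simp
  obtain ⟨p, q, hp, hq', hsum⟩ := core (A 0 0) (A 0 1) (A 1 0) (A 1 1) u hu (by
    intro y hy
    have hh := huv y
    rw [hy, zero_mul] at hh
    exact sub_eq_zero.mp hh)
  refine ⟨!![p 0, p 1; -((starRingEnd ℂ) (p 1)), (starRingEnd ℂ) (p 0)],
         !![(starRingEnd ℂ) (q 1), q 0; -((starRingEnd ℂ) (q 0)), q 1], ?_, ?_, ?_⟩
  · rw [Matrix.det_fin_two_of, isUnit_iff_ne_zero]
    intro hdet
    exact self_pair_ne p hp (by linear_combination hdet)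
  · rw [Matrix.det_fin_two_of, isUnit_iff_ne_zero]
    intro hdet
    exact self_pair_ne q hq' (by linear_combination hdet)
  · simp only [Fin.sum_univ_two, Matrix.of_apply, Matrix.cons_val', Matrix.cons_val_zero,
      Matrix.cons_val_one, Matrix.head_cons, Matrix.empty_val', Matrix.cons_val_fin_one,
      Matrix.head_fin_const]
    rw [← add_assoc]
    exact hsum
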